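/- For α > 0 and μ ∈ ℝ, the function v_μ(z) = log( 8(1+α)² e^μ / (1 + e^μ|z|^{2(1+α)})² ) satisfies the singular Liouville equation Δv_μ + |z|^{2α} e^{v_μ} = 0 at every point of ℝ²∖{0}. -/

import Mathlib

open scoped Real

noncomputable section

abbrev E2 : Type := EuclideanSpace ℝ (Fin 2)

/-- The Laplacian on `ℝ²`, computed via second directional derivatives in the
coordinate directions. -/
def lap (u : E2 → ℝ) (x : E2) : ℝ :=
  fderiv ℝ (fun y => fderiv ℝ u y (EuclideanSpace.single 0 1)) x (EuclideanSpace.single 0 1) +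
  fderiv ℝ (fun y => fderiv ℝ u y (EuclideanSpace.single 1 1)) x (EuclideanSpace.single 1 1)

/-- The standard family of entire solutions of the singular Liouville equation. -/
def vmu (α μ : ℝ) (z : E2) : ℝ :=
  Real.log (8 * (1 + α) ^ 2 * Real.exp μ / (1 + Real.exp μ * ‖z‖ ^ (2 * (1 + α))) ^ 2)

namespace SLAux

/-- the denominator profile -/
def H (A β s : ℝ) : ℝ := 1 + A * s ^ β

/-- the radial profile of `vmu` as a function of `s = ‖z‖²` -/
def G (A β s : ℝ) : ℝ := Real.log (8 * β ^ 2 * A) - 2 * Real.log (H A β s)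

/-- first derivative of `G` -/
def G1 (A β s : ℝ) : ℝ := -(2 * (A * (β * s ^ (β - 1)) / H A β s))

/-- second derivative of `G` -/
def G2 (A β s : ℝ) : ℝ :=
  -(2 * ((A * (β * ((β - 1) * s ^ (β - 2))) * H A β s -
      A * (β * s ^ (β - 1)) * (A * (β * s ^ (β - 1)))) / H A β s ^ 2))

theorem H_pos {A : ℝ} (hA : 0 < A) (β s : ℝ) (hs : 0 ≤ s) : 0 < H A β s := by
  have : 0 ≤ A * s ^ β := by positivity
  unfold H; linarith

theorem hasDerivAt_G {A β s : ℝ} (hA : 0 < A) (hs : 0 < s) :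
    HasDerivAt (G A β) (G1 A β s) s := by
  have h1 : HasDerivAt (fun s => s ^ β) (β * s ^ (β - 1)) s :=
    Real.hasDerivAt_rpow_const (Or.inl hs.ne')
  have h2 : HasDerivAt (H A β) (A * (β * s ^ (β - 1))) s := by
    exact ((h1.const_mul A).const_add 1)
  have h3 : H A β s ≠ 0 := (H_pos hA β s hs.le).ne'
  have h4 := (h2.log h3).const_mul 2
  exact h4.const_sub (Real.log (8 * β ^ 2 * A))

theorem hasDerivAt_G1 {A β s : ℝ} (hA : 0 < A) (hs : 0 < s) :
    HasDerivAt (G1 A β) (G2 A β s) s := by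
  have h1 : HasDerivAt (fun s : ℝ => s ^ (β - 1)) ((β - 1) * s ^ (β - 1 - 1)) s :=
    Real.hasDerivAt_rpow_const (Or.inl hs.ne')
  have h1' : HasDerivAt (fun s : ℝ => s ^ (β - 1)) ((β - 1) * s ^ (β - 2)) s := by
    convert h1 using 2; ring_nf
  have hn : HasDerivAt (fun s : ℝ => A * (β * s ^ (β - 1)))
      (A * (β * ((β - 1) * s ^ (β - 2)))) s := (h1'.const_mul β).const_mul A
  have hH1 : HasDerivAt (fun s : ℝ => s ^ β) (β * s ^ (β - 1)) s :=
    Real.hasDerivAt_rpow_const (Or.inl hs.ne')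
  have hH : HasDerivAt (H A β) (A * (β * s ^ (β - 1))) s := by
    exact ((hH1.const_mul A).const_add 1)
  have h3 : H A β s ≠ 0 := (H_pos hA β s hs.le).ne'
  have := ((hn.div hH h3).const_mul 2).neg
  exact this

/-- squared norm -/
def Q (y : E2) : ℝ := ‖y‖ ^ 2

def p (i : Fin 2) : E2 →L[ℝ] ℝ := EuclideanSpace.proj i

def DQ (y : E2) : E2 →L[ℝ] ℝ := (2 * y 0) • p 0 + (2 * y 1) • p 1

theorem Q_eq (y : E2) : Q y = y 0 * y 0 + y 1 * y 1 := by
  simp only [Q, EuclideanSpace.norm_eq, Fin.sum_univ_two, Real.norm_eq_abs, sq_abs]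
  rw [Real.sq_sqrt (by positivity)]
  ring

theorem hasFDerivAt_Q (y : E2) : HasFDerivAt Q (DQ y) y := by
  have h0 : HasFDerivAt (fun y : E2 => y 0) (p 0) y := (p 0).hasFDerivAt
  have h1 : HasFDerivAt (fun y : E2 => y 1) (p 1) y := (p 1).hasFDerivAt
  have := (h0.mul h0).add (h1.mul h1)
  have hfun : Q = fun y : E2 => y 0 * y 0 + y 1 * y 1 := funext Q_eq
  rw [hfun]
  refine this.congr_fderiv ?_
  unfold DQ
  module

theorem DQ_apply (y : E2) (i : Fin 2) : DQ y (EuclideanSpace.single i 1) = 2 * y i := by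
  fin_cases i <;>
    simp [DQ, p, EuclideanSpace.single_apply, ContinuousLinearMap.add_apply]

theorem rpow_helper (x : ℝ) (hx : 0 ≤ x) (c : ℝ) : x ^ (2 * c) = (x ^ 2 : ℝ) ^ c := by
  rw [show (2:ℝ) * c = ((2:ℕ):ℝ) * c by norm_num, Real.rpow_mul hx, Real.rpow_natCast]

theorem vmu_eq_comp (α μ : ℝ) (hα : 0 < α) (z : E2) :
    vmu α μ z = G (Real.exp μ) (1 + α) (Q z) := by
  have hq : (0:ℝ) ≤ Q z := by unfold Q; positivity
  have hr : ‖z‖ ^ (2 * (1 + α)) = Q z ^ (1 + α) := by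
    rw [rpow_helper ‖z‖ (norm_nonneg z) (1 + α)]; rfl
  have hc : (0:ℝ) < 8 * (1 + α) ^ 2 * Real.exp μ := by positivity
  have hd : (0:ℝ) < 1 + Real.exp μ * Q z ^ (1 + α) := by
    have := Real.rpow_nonneg hq (1 + α)
    nlinarith [Real.exp_pos μ]
  unfold vmu G H
  rw [hr, Real.log_div hc.ne' (pow_ne_zero 2 hd.ne'), Real.log_pow]
  push_cast
  ring

end SLAux

/-- for `α > 0` and `μ ∈ ℝ`, the function
`v_μ(z) = log(8(1+α)²e^μ/(1+e^μ|z|^{2(1+α)})²)` satisfies the singular Liouville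
equation `Δv_μ + |z|^{2α} e^{v_μ} = 0` at every point of `ℝ²∖{0}`. -/
theorem vmu_solves_singular_liouville (α μ : ℝ) (hα : 0 < α) :
    ∀ z : E2, z ≠ 0 →
      lap (vmu α μ) z + ‖z‖ ^ (2 * α) * Real.exp (vmu α μ z) = 0 := by
  intro x hx
  set A := Real.exp μ with hAdef
  have hA : 0 < A := Real.exp_pos μ
  set β := 1 + α with hβdef
  have hfun : vmu α μ = fun z => SLAux.G A β (SLAux.Q z) :=
    funext (SLAux.vmu_eq_comp α μ hα)
  have hQpos : ∀ y : E2, y ≠ 0 → 0 < SLAux.Q y := by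
    intro y hy
    exact pow_pos (norm_pos_iff.mpr hy) 2
  have hU : ∀ y : E2, y ≠ 0 → HasFDerivAt (vmu α μ)
      ((SLAux.G1 A β (SLAux.Q y)) • SLAux.DQ y) y := by
    intro y hy
    rw [hfun]
    exact (SLAux.hasDerivAt_G hA (hQpos y hy)).comp_hasFDerivAt y (SLAux.hasFDerivAt_Q y)
  have hfd : ∀ (y : E2), y ≠ 0 → ∀ i : Fin 2,
      fderiv ℝ (vmu α μ) y (EuclideanSpace.single i 1)
        = SLAux.G1 A β (SLAux.Q y) * (2 * y i) := by
    intro y hy i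
    rw [(hU y hy).fderiv]
    simp [SLAux.DQ_apply]
  set s := SLAux.Q x with hsdef
  have hs : 0 < s := hQpos x hx
  have key : ∀ i : Fin 2,
      fderiv ℝ (fun y => fderiv ℝ (vmu α μ) y (EuclideanSpace.single i 1)) x
        (EuclideanSpace.single i 1)
      = SLAux.G1 A β s * 2 + 2 * x i * (SLAux.G2 A β s * (2 * x i)) := by
    intro i
    have hmem : {y : E2 | y ≠ 0} ∈ nhds x := isOpen_compl_singleton.mem_nhds hx
    have hEq : (fun y => fderiv ℝ (vmu α μ) y (EuclideanSpace.single i 1))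
        =ᶠ[nhds x] fun y => SLAux.G1 A β (SLAux.Q y) * (2 * y i) :=
      Filter.eventually_of_mem hmem (fun y hy => hfd y hy i)
    rw [hEq.fderiv_eq]
    have hc : HasFDerivAt (fun y : E2 => SLAux.G1 A β (SLAux.Q y))
        ((SLAux.G2 A β s) • SLAux.DQ x) x := by
      have := (SLAux.hasDerivAt_G1 (β := β) hA hs).comp_hasFDerivAt x (SLAux.hasFDerivAt_Q x)
      exact this
    have hd : HasFDerivAt (fun y : E2 => 2 * y i) ((2:ℝ) • SLAux.p i) x := by
      exact (SLAux.p i).hasFDerivAt.const_mul 2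
    rw [(show HasFDerivAt (fun y : E2 => SLAux.G1 A β (SLAux.Q y) * (2 * y i)) _ x from hc.mul hd).fderiv]
    simp [SLAux.p, EuclideanSpace.single_apply, SLAux.DQ_apply, ← hsdef]
  have hxsum : x 0 * x 0 + x 1 * x 1 = s := (SLAux.Q_eq x).symm
  have hH : 0 < SLAux.H A β s := SLAux.H_pos hA β s hs.le
  have hexp : Real.exp (vmu α μ x) = (8 * β ^ 2 * A) / SLAux.H A β s ^ 2 := by
    rw [hfun]
    show Real.exp (SLAux.G A β s) = _
    unfold SLAux.G
    rw [show (2:ℝ) * Real.log (SLAux.H A β s) = Real.log (SLAux.H A β s ^ 2) by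
      rw [Real.log_pow]; push_cast; ring]
    rw [Real.exp_sub, Real.exp_log (by positivity), Real.exp_log (by positivity)]
  have hrx : ‖x‖ ^ (2 * α) = s ^ α := by
    rw [SLAux.rpow_helper ‖x‖ (norm_nonneg x) α, hsdef]; rfl
  unfold lap
  rw [key 0, key 1, hexp, hrx]
  have hcomb : SLAux.G1 A β s * 2 + 2 * x 0 * (SLAux.G2 A β s * (2 * x 0)) +
      (SLAux.G1 A β s * 2 + 2 * x 1 * (SLAux.G2 A β s * (2 * x 1)))
      = 4 * SLAux.G1 A β s + 4 * s * SLAux.G2 A β s := by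
    rw [← hxsum]; ring
  rw [hcomb]
  unfold SLAux.G1 SLAux.G2 SLAux.H
  unfold SLAux.H at hH
  set t := s ^ (β - 2) with ht
  have e1 : s ^ (β - 1) = t * s := by
    rw [ht, show β - 1 = (β - 2) + 1 by ring, Real.rpow_add hs, Real.rpow_one]
  have e2 : s ^ β = t * s ^ 2 := by
    rw [show β = (β - 1) + 1 by ring, Real.rpow_add hs, Real.rpow_one, e1]; ring
  have e3 : s ^ α = t * s := by
    rw [ht, show α = (β - 2) + 1 by rw [hβdef]; ring, Real.rpow_add hs, Real.rpow_one]
  rw [e1, e2, e3]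
  rw [e2] at hH
  have hHne : (1 + A * (t * s ^ 2)) ≠ 0 := hH.ne'
  field_simp
  ring
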